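/- Let M > 0. Suppose for each level k ∈ ℕ and each j ∈ ℤ, a mask a^{j,k} is given whose nonzero entries are of the form sinh((3/4)γ·2^{-k})/sinh(γ·2^{-k}) and sinh((1/4)γ·2^{-k})/sinh(γ·2^{-k}) with |γ| ≤ M. Then Σ_{k=0}^∞ sup_j Σ_n |a^{j,k}_n − a_n| < ∞, where a = {1/4, 3/4, 3/4, 1/4} is the Chaikin mask. -/

import Mathlib

open Real

lemma aux_sinh_le_mul_cosh {y : ℝ} (hy : 0 ≤ y) : Real.sinh y ≤ y * Real.cosh y := by
  have h : MonotoneOn (fun x => x * Real.cosh x - Real.sinh x) (Set.Ici 0) := by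
    apply monotoneOn_of_deriv_nonneg (convex_Ici 0)
    · exact ((continuous_id.mul Real.continuous_cosh).sub Real.continuous_sinh).continuousOn
    · intro x hx
      exact (((differentiable_id.mul Real.differentiable_cosh).sub
        Real.differentiable_sinh) x).differentiableWithinAt
    · intro x hx
      rw [interior_Ici, Set.mem_Ioi] at hx
      have hd : HasDerivAt (fun x => x * Real.cosh x - Real.sinh x) (x * Real.sinh x) x := by
        have := ((hasDerivAt_id x).mul (Real.hasDerivAt_cosh x)).sub (Real.hasDerivAt_sinh x)
        refine this.congr_deriv ?_
        simp only [id]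
        ring
      rw [hd.deriv]
      exact mul_nonneg hx.le (Real.sinh_nonneg_iff.2 hx.le)
  have := h (Set.self_mem_Ici) (Set.mem_Ici.2 hy) hy
  simpa using this

lemma aux_cosh_sub_one {y : ℝ} : Real.cosh y - 1 ≤ y ^ 2 / 2 * Real.cosh y := by
  have key : ∀ z : ℝ, 0 ≤ z → Real.cosh z - 1 ≤ z ^ 2 / 2 * Real.cosh z := by
    intro z hz
    have h1 : Real.cosh z = 1 + 2 * Real.sinh (z / 2) ^ 2 := by
      have := Real.cosh_two_mul (z / 2)
      have h2 := Real.cosh_sq (z / 2)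
      rw [show 2 * (z / 2) = z by ring] at this
      rw [this, h2]; ring
    have h3 : Real.sinh (z / 2) ≤ z / 2 * Real.cosh (z / 2) :=
      aux_sinh_le_mul_cosh (by linarith)
    have h4 : Real.sinh (z / 2) ^ 2 ≤ (z / 2) ^ 2 * Real.cosh (z / 2) ^ 2 := by
      have hs : 0 ≤ Real.sinh (z / 2) := Real.sinh_nonneg_iff.2 (by linarith)
      calc Real.sinh (z / 2) ^ 2 ≤ (z / 2 * Real.cosh (z / 2)) ^ 2 := by
            apply pow_le_pow_left₀ hs h3
        _ = (z / 2) ^ 2 * Real.cosh (z / 2) ^ 2 := by ring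
    have h5 : Real.cosh (z / 2) ^ 2 ≤ Real.cosh z := by
      have := Real.cosh_two_mul (z / 2)
      rw [show 2 * (z / 2) = z by ring] at this
      nlinarith [Real.one_le_cosh z]
    have h6 : Real.sinh (z / 2) ^ 2 ≤ (z / 2) ^ 2 * Real.cosh z := by
      calc Real.sinh (z / 2) ^ 2 ≤ (z / 2) ^ 2 * Real.cosh (z / 2) ^ 2 := h4
        _ ≤ (z / 2) ^ 2 * Real.cosh z := by
            apply mul_le_mul_of_nonneg_left h5 (by positivity)
    nlinarith
  rcases le_total 0 y with h | h
  · exact key y h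
  · have := key (-y) (by linarith)
    simpa using this

/-- Key estimate: for `0 < c ≤ 1` and `x ≠ 0`,
`|sinh (c*x) / sinh x - c| ≤ x^2/2 * cosh x`. -/
lemma aux_key {c x : ℝ} (hc0 : 0 < c) (hc1 : c ≤ 1) (hx : x ≠ 0) :
    |Real.sinh (c * x) / Real.sinh x - c| ≤ x ^ 2 / 2 * Real.cosh x := by
  have main : ∀ z : ℝ, 0 < z → |Real.sinh (c * z) / Real.sinh z - c| ≤ z ^ 2 / 2 * Real.cosh z := by
    intro z hz
    have hsz : 0 < Real.sinh z := Real.sinh_pos_iff.2 hz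
    have hzs : z ≤ Real.sinh z := Real.self_le_sinh_iff.2 hz.le
    have hcz : 0 < c * z := mul_pos hc0 hz
    have h1 : Real.sinh (c * z) ≤ c * z * Real.cosh (c * z) := aux_sinh_le_mul_cosh hcz.le
    have hcoshle : Real.cosh (c * z) ≤ Real.cosh z := by
      rw [Real.cosh_le_cosh]
      rw [abs_of_pos hcz, abs_of_pos hz]
      nlinarith
    have hub : Real.sinh (c * z) - c * Real.sinh z ≤ c * z * (Real.cosh z - 1) := by
      have : c * z ≤ c * Real.sinh z := by nlinarith
      nlinarith
    have hlb : -(c * z * (Real.cosh z - 1)) ≤ Real.sinh (c * z) - c * Real.sinh z := by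
      have h2 : c * z ≤ Real.sinh (c * z) := Real.self_le_sinh_iff.2 hcz.le
      have h3 : Real.sinh z ≤ z * Real.cosh z := aux_sinh_le_mul_cosh hz.le
      nlinarith
    have habs : |Real.sinh (c * z) - c * Real.sinh z| ≤ c * z * (Real.cosh z - 1) :=
      abs_le.2 ⟨by linarith, hub⟩
    have heq : Real.sinh (c * z) / Real.sinh z - c
        = (Real.sinh (c * z) - c * Real.sinh z) / Real.sinh z := by
      field_simp
    rw [heq, abs_div, abs_of_pos hsz]
    rw [div_le_iff₀ hsz]
    have hch1 : (1:ℝ) ≤ Real.cosh z := Real.one_le_cosh z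
    have step1 : |Real.sinh (c * z) - c * Real.sinh z| ≤ z * (Real.cosh z - 1) := by
      have : c * z * (Real.cosh z - 1) ≤ z * (Real.cosh z - 1) := by nlinarith
      linarith
    have step2 : z * (Real.cosh z - 1) ≤ (Real.cosh z - 1) * Real.sinh z := by
      nlinarith
    have step3 : Real.cosh z - 1 ≤ z ^ 2 / 2 * Real.cosh z := aux_cosh_sub_one
    nlinarith
  rcases hx.lt_or_gt with h | h
  · have := main (-x) (by linarith)
    rw [show c * -x = -(c * x) by ring, Real.sinh_neg, Real.sinh_neg, neg_div_neg_eq] at this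
    simpa using this
  · exact main x h

lemma aux_term (M : ℝ) (hM : 0 < M) (k : ℕ) {γ c : ℝ} (hγ : γ ≠ 0) (hγM : |γ| ≤ M)
    (hc0 : 0 < c) (hc1 : c ≤ 1) :
    |Real.sinh (c * γ * 2 ^ (-(k : ℤ))) / Real.sinh (γ * 2 ^ (-(k : ℤ))) - c|
      ≤ Real.cosh M * M ^ 2 / 2 * (1 / 4 : ℝ) ^ k := by
  set t : ℝ := 2 ^ (-(k : ℤ)) with ht
  have ht' : t = (1 / 2 : ℝ) ^ k := by
    rw [ht, zpow_neg, zpow_natCast, one_div, inv_pow]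
  have htpos : 0 < t := by rw [ht']; positivity
  have ht1 : t ≤ 1 := by
    rw [ht']; exact pow_le_one₀ (by norm_num) (by norm_num)
  set x : ℝ := γ * t with hx
  have hxne : x ≠ 0 := mul_ne_zero hγ htpos.ne'
  have hkey := aux_key hc0 hc1 hxne
  have hcx : c * γ * t = c * x := by rw [hx]; ring
  rw [hcx] at *
  have habsx : |x| ≤ M * t := by
    rw [hx, abs_mul, abs_of_pos htpos]
    exact mul_le_mul_of_nonneg_right hγM htpos.le
  have hxM : |x| ≤ M := le_trans habsx (by nlinarith)
  have hcosh : Real.cosh x ≤ Real.cosh M := by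
    rw [Real.cosh_le_cosh, abs_of_pos hM]; exact hxM
  have hx2 : x ^ 2 ≤ M ^ 2 * (1 / 4 : ℝ) ^ k := by
    have h1 : x ^ 2 = γ ^ 2 * t ^ 2 := by rw [hx]; ring
    have h2 : t ^ 2 = (1 / 4 : ℝ) ^ k := by
      rw [ht', ← pow_mul, mul_comm k 2, pow_mul]; norm_num
    have h3 : γ ^ 2 ≤ M ^ 2 := by
      rw [← sq_abs γ]; exact pow_le_pow_left₀ (abs_nonneg _) hγM 2
    rw [h1, h2]
    exact mul_le_mul_of_nonneg_right h3 (by positivity)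
  have hchpos : 0 < Real.cosh x := Real.cosh_pos x
  calc |Real.sinh (c * x) / Real.sinh x - c| ≤ x ^ 2 / 2 * Real.cosh x := hkey
    _ ≤ (M ^ 2 * (1 / 4 : ℝ) ^ k) / 2 * Real.cosh M := by
        apply mul_le_mul (by linarith) hcosh hchpos.le (by positivity)
    _ = Real.cosh M * M ^ 2 / 2 * (1 / 4 : ℝ) ^ k := by ring

noncomputable def chaikinMask : ℤ → ℝ := fun n =>
  if n = -2 then 1 / 4 else if n = -1 then 3 / 4 else
  if n = 0 then 3 / 4 else if n = 1 then 1 / 4 else 0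

theorem nucc_asymptotically_equivalent_to_chaikin
    (M : ℝ) (hM : 0 < M)
    (a : ℕ → ℤ → ℤ → ℝ) (γ₀ γ₁ : ℕ → ℤ → ℝ)
    (hγ₀ : ∀ k j, γ₀ k j ≠ 0 ∧ |γ₀ k j| ≤ M)
    (hγ₁ : ∀ k j, γ₁ k j ≠ 0 ∧ |γ₁ k j| ≤ M)
    (ha₂ : ∀ k j, a k j (-2)
      = Real.sinh ((1 / 4) * γ₀ k j * 2 ^ (-(k : ℤ))) / Real.sinh (γ₀ k j * 2 ^ (-(k : ℤ))))
    (ha₀ : ∀ k j, a k j 0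
      = Real.sinh ((3 / 4) * γ₀ k j * 2 ^ (-(k : ℤ))) / Real.sinh (γ₀ k j * 2 ^ (-(k : ℤ))))
    (ha₁' : ∀ k j, a k j (-1)
      = Real.sinh ((3 / 4) * γ₁ k j * 2 ^ (-(k : ℤ))) / Real.sinh (γ₁ k j * 2 ^ (-(k : ℤ))))
    (ha₁ : ∀ k j, a k j 1
      = Real.sinh ((1 / 4) * γ₁ k j * 2 ^ (-(k : ℤ))) / Real.sinh (γ₁ k j * 2 ^ (-(k : ℤ))))
    (ha0 : ∀ k j n, n ∉ Finset.Icc (-2 : ℤ) 1 → a k j n = 0) :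
    Summable (fun k : ℕ =>
      ⨆ j : ℤ, ∑ n ∈ Finset.Icc (-2 : ℤ) 1, |a k j n - chaikinMask n|) := by
  set C : ℝ := Real.cosh M * M ^ 2 / 2 with hC
  have hCpos : 0 < C := by
    have := Real.cosh_pos M
    positivity
  have hIcc : Finset.Icc (-2 : ℤ) 1 = {-2, -1, 0, 1} := by decide
  have hbound : ∀ k j, ∑ n ∈ Finset.Icc (-2 : ℤ) 1, |a k j n - chaikinMask n|
      ≤ 4 * C * (1 / 4 : ℝ) ^ k := by
    intro k j
    rw [hIcc]
    have e2 : |a k j (-2) - chaikinMask (-2)| ≤ C * (1 / 4 : ℝ) ^ k := by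
      rw [ha₂, show chaikinMask (-2) = 1 / 4 by norm_num [chaikinMask]]
      exact aux_term M hM k (hγ₀ k j).1 (hγ₀ k j).2 (by norm_num) (by norm_num)
    have e1 : |a k j (-1) - chaikinMask (-1)| ≤ C * (1 / 4 : ℝ) ^ k := by
      rw [ha₁', show chaikinMask (-1) = 3 / 4 by norm_num [chaikinMask]]
      exact aux_term M hM k (hγ₁ k j).1 (hγ₁ k j).2 (by norm_num) (by norm_num)
    have e0 : |a k j 0 - chaikinMask 0| ≤ C * (1 / 4 : ℝ) ^ k := by
      rw [ha₀, show chaikinMask 0 = 3 / 4 by norm_num [chaikinMask]]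
      exact aux_term M hM k (hγ₀ k j).1 (hγ₀ k j).2 (by norm_num) (by norm_num)
    have e1' : |a k j 1 - chaikinMask 1| ≤ C * (1 / 4 : ℝ) ^ k := by
      rw [ha₁, show chaikinMask 1 = 1 / 4 by norm_num [chaikinMask]]
      exact aux_term M hM k (hγ₁ k j).1 (hγ₁ k j).2 (by norm_num) (by norm_num)
    rw [show ({-2, -1, 0, 1} : Finset ℤ) = insert (-2) (insert (-1) (insert 0 {1})) from rfl]
    rw [Finset.sum_insert (by decide), Finset.sum_insert (by decide),
      Finset.sum_insert (by decide), Finset.sum_singleton]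
    linarith
  apply Summable.of_nonneg_of_le
    (fun k => Real.iSup_nonneg fun j => Finset.sum_nonneg fun n _ => abs_nonneg _)
    (fun k => ciSup_le fun j => hbound k j)
  exact (summable_geometric_of_lt_one (by norm_num) (by norm_num)).mul_left (4 * C)
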